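/- Let P be a finite-dimensional soluble primitive left Leibniz algebra with socle C. Then there exists a maximal subalgebra M of P with M + C = P and M ∩ C = 0, i.e., P splits over C. -/

import Mathlib

/-- Derived series: `A⁽⁰⁾ = A`, `A⁽ⁿ⁺¹⁾ = (A⁽ⁿ⁾)²`. -/
def derSeries {F A : Type*} [Field F] [AddCommGroup A] [Module F A]
    (mul : A →ₗ[F] A →ₗ[F] A) : ℕ → Submodule F A
  | 0 => ⊤
  | k + 1 => Submodule.span F
      {x : A | ∃ a ∈ derSeries mul k, ∃ b ∈ derSeries mul k, x = mul a b}

/-- `I` is a two-sided ideal. -/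
def IsIdeal {F A : Type*} [Field F] [AddCommGroup A] [Module F A]
    (mul : A →ₗ[F] A →ₗ[F] A) (I : Submodule F A) : Prop :=
  ∀ a : A, ∀ x ∈ I, mul a x ∈ I ∧ mul x a ∈ I

/-- `I` is a minimal ideal. -/
def IsMinIdeal {F A : Type*} [Field F] [AddCommGroup A] [Module F A]
    (mul : A →ₗ[F] A →ₗ[F] A) (I : Submodule F A) : Prop :=
  IsIdeal mul I ∧ I ≠ ⊥ ∧ ∀ J : Submodule F A, IsIdeal mul J → J ≤ I → J = ⊥ ∨ J = I

/-- `U` is a maximal subalgebra. -/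
def IsMaxSubalg {F A : Type*} [Field F] [AddCommGroup A] [Module F A]
    (mul : A →ₗ[F] A →ₗ[F] A) (U : Submodule F A) : Prop :=
  (∀ u ∈ U, ∀ v ∈ U, mul u v ∈ U) ∧ U ≠ ⊤ ∧
    ∀ V : Submodule F A, (∀ u ∈ V, ∀ v ∈ V, mul u v ∈ V) → U < V → V = ⊤

open Module

section aux
variable {F A : Type*} [Field F] [AddCommGroup A] [Module F A]

/-- Leibniz rule kernel lemma: powers of a left multiplication (a derivation)
kill products of kernel elements. -/
lemma aux_ker_mul (mul : A →ₗ[F] A →ₗ[F] A)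
    (leibniz : ∀ a b c : A, mul a (mul b c) = mul (mul a b) c + mul b (mul a c))
    (b : A) :
    ∀ n p q : ℕ, p + q = n → ∀ x y : A, ((mul b) ^ p) x = 0 → ((mul b) ^ q) y = 0 →
      ((mul b) ^ n) (mul x y) = 0 := by
  intro n
  induction n with
  | zero =>
    intro p q hpq x y hx hy
    obtain ⟨hp, hq⟩ := Nat.add_eq_zero.mp hpq
    subst hp; subst hq
    simp only [pow_zero, Module.End.one_apply] at hx hy ⊢
    subst hx
    simp
  | succ n ih =>
    intro p q hpq x y hx hy
    rcases p with _ | p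
    · simp only [pow_zero, Module.End.one_apply] at hx
      subst hx; simp
    rcases q with _ | q
    · simp only [pow_zero, Module.End.one_apply] at hy
      subst hy; simp
    have e1 : ((mul b) ^ (n + 1)) (mul x y)
        = ((mul b) ^ n) (mul b (mul x y)) := by
      rw [pow_succ]; rfl
    rw [e1, leibniz b x y, map_add]
    have hx' : ((mul b) ^ p) (mul b x) = 0 := by
      rw [show ((mul b) ^ p) (mul b x) = ((mul b) ^ (p + 1)) x by rw [pow_succ]; rfl]
      exact hx
    have hy' : ((mul b) ^ q) (mul b y) = 0 := by
      rw [show ((mul b) ^ q) (mul b y) = ((mul b) ^ (q + 1)) y by rw [pow_succ]; rfl]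
      exact hy
    rw [ih p (q + 1) (by omega) (mul b x) y hx' hy,
      ih (p + 1) q (by omega) x (mul b y) hx hy', add_zero]

/-- Common kernel of a commuting family of nilpotent operators. -/
lemma aux_common_kernel (mul : A →ₗ[F] A →ₗ[F] A) (N : ℕ) :
    ∀ (l : List A) (V : Submodule F A), V ≠ ⊥ →
    (∀ a ∈ l, ∀ x ∈ V, mul a x ∈ V) →
    (∀ a ∈ l, ∀ x ∈ V, ((mul a) ^ N) x = 0) →
    (∀ a ∈ l, ∀ a' ∈ l, ∀ x ∈ V, mul a (mul a' x) = mul a' (mul a x)) →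
    ∃ x ∈ V, x ≠ 0 ∧ ∀ a ∈ l, mul a x = 0 := by
  intro l
  induction l with
  | nil =>
    intro V hV _ _ _
    obtain ⟨x, hxV, hx⟩ := Submodule.exists_mem_ne_zero_of_ne_bot hV
    exact ⟨x, hxV, hx, by simp⟩
  | cons a l ih =>
    intro V hV hinv hnil hcomm
    have haa : a ∈ a :: l := List.mem_cons_self
    obtain ⟨x, hxV, hx⟩ := Submodule.exists_mem_ne_zero_of_ne_bot hV
    have hiter : ∀ j : ℕ, ((mul a) ^ j) x ∈ V := by
      intro j
      induction j with
      | zero => simpa using hxV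
      | succ j ihj =>
        rw [show ((mul a) ^ (j+1)) x = mul a (((mul a) ^ j) x) by rw [pow_succ']; rfl]
        exact hinv a haa _ ihj
    have hex : ∃ k, ((mul a) ^ k) x = 0 := ⟨N, hnil a haa x hxV⟩
    classical
    set k := Nat.find hex with hk
    have hk0 : k ≠ 0 := by
      intro h
      have := Nat.find_spec hex
      rw [← hk, h] at this
      simp only [pow_zero, Module.End.one_apply] at this
      exact hx this
    set y := ((mul a) ^ (k - 1)) x with hy
    have hyV : y ∈ V := hiter _
    have hyne : y ≠ 0 := Nat.find_min hex (by omega)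
    have hay : mul a y = 0 := by
      rw [hy, show mul a (((mul a) ^ (k-1)) x) = ((mul a) ^ (k - 1 + 1)) x by
        rw [pow_succ']; rfl]
      rw [show k - 1 + 1 = k by omega]
      exact Nat.find_spec hex
    set V' := V ⊓ LinearMap.ker (mul a) with hV'
    have hV'ne : V' ≠ ⊥ := by
      intro h
      apply hyne
      have : y ∈ V' := ⟨hyV, LinearMap.mem_ker.mpr hay⟩
      rw [h] at this
      simpa using this
    have hmem : ∀ a' ∈ l, a' ∈ a :: l := fun a' h => List.mem_cons_of_mem a h
    obtain ⟨z, hzV', hzne, hz⟩ := ih V' hV'ne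
      (by
        intro a' ha' w hw
        refine ⟨hinv a' (hmem a' ha') w hw.1, LinearMap.mem_ker.mpr ?_⟩
        have hw2 : mul a w = 0 := LinearMap.mem_ker.mp hw.2
        rw [hcomm a haa a' (hmem a' ha') w hw.1, hw2, map_zero])
      (fun a' ha' w hw => hnil a' (hmem a' ha') w hw.1)
      (fun a' ha' a'' ha'' w hw => hcomm a' (hmem a' ha') a'' (hmem a'' ha'') w hw.1)
    refine ⟨z, hzV'.1, hzne, ?_⟩
    intro a' ha'
    rcases List.mem_cons.mp ha' with h | h
    · subst h; exact LinearMap.mem_ker.mp hzV'.2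
    · exact hz a' h

lemma aux_max [FiniteDimensional F A] (mul : A →ₗ[F] A →ₗ[F] A) :
    ∀ d : ℕ, ∀ U : Submodule F A, (∀ u ∈ U, ∀ v ∈ U, mul u v ∈ U) → U ≠ ⊤ →
      finrank F A - finrank F U ≤ d → ∃ M, U ≤ M ∧ IsMaxSubalg mul M := by
  intro d
  induction d with
  | zero =>
    intro U hU hUne hd
    exfalso
    apply hUne
    have h1 : finrank F U ≤ finrank F A := U.finrank_le
    have h2 : finrank F A ≤ finrank F U := by omega
    exact Submodule.eq_top_of_finrank_eq (le_antisymm h1 h2)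
  | succ d ih =>
    intro U hU hUne hd
    by_cases hmax : ∀ V : Submodule F A, (∀ u ∈ V, ∀ v ∈ V, mul u v ∈ V) → U < V → V = ⊤
    · exact ⟨U, le_refl U, hU, hUne, hmax⟩
    · push_neg at hmax
      obtain ⟨V, hVsub, hUV, hVne⟩ := hmax
      have h1 : finrank F U < finrank F V := Submodule.finrank_lt_finrank_of_lt hUV
      obtain ⟨M, hVM, hM⟩ := ih V hVsub hVne (by omega)
      exact ⟨M, le_trans (le_of_lt hUV) hVM, hM⟩

end aux

/-- a finite-dimensional soluble primitive left Leibniz algebra splits over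
its socle: there is a maximal subalgebra `M` with `M + C = P` and `M ∩ C = 0`. -/
theorem primitive_splits_over_socle {F A : Type*} [Field F] [AddCommGroup A] [Module F A]
    [FiniteDimensional F A]
    (mul : A →ₗ[F] A →ₗ[F] A)
    (leibniz : ∀ a b c : A, mul a (mul b c) = mul (mul a b) c + mul b (mul a c))
    (hsol : ∃ k, derSeries mul k = ⊥)
    (C : Submodule F A) (hC : IsMinIdeal mul C)
    (hcent : {x : A | ∀ c ∈ C, mul x c = 0 ∧ mul c x = 0} = (C : Set A)) :
    ∃ M : Submodule F A, IsMaxSubalg mul M ∧ M ⊔ C = ⊤ ∧ M ⊓ C = ⊥ := by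
  classical
  obtain ⟨hCideal, hCne, hCmin⟩ := hC
  have habel : ∀ c ∈ C, ∀ c' ∈ C, mul c c' = 0 := by
    intro c hc c' hc'
    have hcmem : c ∈ {x : A | ∀ c ∈ C, mul x c = 0 ∧ mul c x = 0} := by
      rw [hcent]; exact hc
    exact (hcmem c' hc').1
  by_cases hCtop : C = ⊤
  · have hmul0 : ∀ x y : A, mul x y = 0 := fun x y =>
      habel x (by rw [hCtop]; trivial) y (by rw [hCtop]; trivial)
    refine ⟨⊥, ⟨fun u _ v _ => by rw [hmul0]; exact Submodule.zero_mem ⊥, ?_, ?_⟩, ?_, ?_⟩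
    · intro h
      exact hCne (by rw [hCtop, ← h])
    · intro V hVsub hV
      rcases hCmin V (fun a x _ => ⟨by rw [hmul0]; exact V.zero_mem,
          by rw [hmul0]; exact V.zero_mem⟩) (by rw [hCtop]; exact le_top) with h | h
      · exact absurd h hV.ne'
      · rw [h, hCtop]
    · rw [bot_sup_eq, hCtop]
    · exact bot_inf_eq C
  · have hCltTop : C < ⊤ := lt_of_le_of_ne le_top hCtop
    have hEx : ∃ n : ℕ, ∃ D : Submodule F A, (IsIdeal mul D ∧ C < D) ∧ finrank F ↥D = n :=
      ⟨finrank F (⊤ : Submodule F A), ⊤,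
        ⟨fun _ x _ => ⟨Submodule.mem_top, Submodule.mem_top⟩, hCltTop⟩, rfl⟩
    obtain ⟨D, ⟨hDideal, hCD⟩, hDrank⟩ := Nat.find_spec hEx
    have hDmin : ∀ J : Submodule F A, IsIdeal mul J → C < J → finrank F D ≤ finrank F J := by
      intro J hJ hCJ
      by_contra hlt
      push_neg at hlt
      exact Nat.find_min hEx (hDrank ▸ hlt) ⟨J, ⟨hJ, hCJ⟩, rfl⟩
    -- D² ⊆ C
    set S2 : Set A := {z : A | ∃ x ∈ D, ∃ y ∈ D, z = mul x y} with hS2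
    have hS2D : Submodule.span F S2 ≤ D := by
      rw [Submodule.span_le]
      rintro z ⟨x, hx, y, hy, rfl⟩
      exact (hDideal x y hy).1
    have hBD : C ⊔ Submodule.span F S2 ≤ D := sup_le (le_of_lt hCD) hS2D
    have hspan_inv : ∀ a : A, ∀ w ∈ Submodule.span F S2,
        mul a w ∈ Submodule.span F S2 ∧ mul w a ∈ Submodule.span F S2 := by
      intro a w hw
      induction hw using Submodule.span_induction with
      | mem z hz =>
        obtain ⟨x, hx, y, hy, rfl⟩ := hz
        constructor
        · rw [leibniz a x y]
          exact Submodule.add_mem _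
            (Submodule.subset_span ⟨mul a x, (hDideal a x hx).1, y, hy, rfl⟩)
            (Submodule.subset_span ⟨x, hx, mul a y, (hDideal a y hy).1, rfl⟩)
        · have h : mul (mul x y) a = mul x (mul y a) - mul y (mul x a) := by
            rw [leibniz x y a]; abel
          rw [h]
          exact Submodule.sub_mem _
            (Submodule.subset_span ⟨x, hx, mul y a, (hDideal a y hy).2, rfl⟩)
            (Submodule.subset_span ⟨y, hy, mul x a, (hDideal a x hx).2, rfl⟩)
      | zero => constructor <;> simp
      | add u v hu hv ihu ihv =>
        constructor
        · rw [map_add]; exact Submodule.add_mem _ ihu.1 ihv.1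
        · rw [map_add, LinearMap.add_apply]; exact Submodule.add_mem _ ihu.2 ihv.2
      | smul r u hu ihu =>
        constructor
        · rw [map_smul]; exact Submodule.smul_mem _ r ihu.1
        · rw [map_smul, LinearMap.smul_apply]; exact Submodule.smul_mem _ r ihu.2
    have hBideal : IsIdeal mul (C ⊔ Submodule.span F S2) := by
      intro a z hz
      rcases Submodule.mem_sup.mp hz with ⟨c, hc, w, hw, rfl⟩
      constructor
      · rw [map_add]
        exact Submodule.add_mem _ (Submodule.mem_sup_left (hCideal a c hc).1)
          (Submodule.mem_sup_right (hspan_inv a w hw).1)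
      · rw [map_add, LinearMap.add_apply]
        exact Submodule.add_mem _ (Submodule.mem_sup_left (hCideal a c hc).2)
          (Submodule.mem_sup_right (hspan_inv a w hw).2)
    have hBneD : C ⊔ Submodule.span F S2 ≠ D := by
      intro hBD2
      obtain ⟨k0, hk0⟩ := hsol
      have hind : ∀ k, D ≤ derSeries mul k ⊔ C := by
        intro k
        induction k with
        | zero => rw [show derSeries mul 0 = ⊤ from rfl, top_sup_eq]; exact le_top
        | succ k ihk =>
          rw [← hBD2]
          apply sup_le le_sup_right
          rw [Submodule.span_le]
          rintro z ⟨x, hx, y, hy, rfl⟩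
          rcases Submodule.mem_sup.mp (ihk hx) with ⟨d, hd, c, hc, rfl⟩
          rcases Submodule.mem_sup.mp (ihk hy) with ⟨d', hd', c', hc', rfl⟩
          have expand : mul (d + c) (d' + c')
              = mul d d' + (mul d c' + (mul c d' + mul c c')) := by
            simp only [map_add, LinearMap.add_apply]
            abel
          rw [SetLike.mem_coe, expand]
          refine Submodule.add_mem _ (Submodule.mem_sup_left ?_) (Submodule.mem_sup_right ?_)
          · rw [show derSeries mul (k+1) = Submodule.span F
              {x : A | ∃ a ∈ derSeries mul k, ∃ b ∈ derSeries mul k, x = mul a b} from rfl]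
            exact Submodule.subset_span ⟨d, hd, d', hd', rfl⟩
          · refine Submodule.add_mem _ (hCideal d c' hc').1 (Submodule.add_mem _
              (hCideal d' c hc).2 ?_)
            rw [habel c hc c' hc']
            exact C.zero_mem
      have hfin := hind k0
      rw [hk0, bot_sup_eq] at hfin
      exact lt_irrefl C (lt_of_lt_of_le hCD hfin)
    have hBC : C ⊔ Submodule.span F S2 = C := by
      have hlt : C ⊔ Submodule.span F S2 < D := lt_of_le_of_ne hBD hBneD
      have hr : finrank F ↥(C ⊔ Submodule.span F S2) < finrank F D :=
        Submodule.finrank_lt_finrank_of_lt hlt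
      by_contra hne
      have hCB : C < C ⊔ Submodule.span F S2 := lt_of_le_of_ne le_sup_left (Ne.symm hne)
      have := hDmin _ hBideal hCB
      omega
    have hsq : ∀ x ∈ D, ∀ y ∈ D, mul x y ∈ C := by
      intro x hx y hy
      have h1 : mul x y ∈ Submodule.span F S2 := Submodule.subset_span ⟨x, hx, y, hy, rfl⟩
      have h2 : Submodule.span F S2 ≤ C := le_trans le_sup_right (le_of_eq hBC)
      exact h2 h1
    set n0 : ℕ := finrank F A + 2 with hn0
    by_cases hnilp : ∀ b ∈ D, ∀ c ∈ C, ((mul b) ^ n0) c = 0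
    · exfalso
      obtain ⟨s, hs⟩ := (IsNoetherian.noetherian D : D.FG)
      have hsD : ∀ a ∈ s.toList, a ∈ D := by
        intro a ha
        rw [← hs]
        exact Submodule.subset_span (by simpa using ha)
      obtain ⟨x0, hx0C, hx0ne, hx0⟩ := aux_common_kernel mul n0 s.toList C hCne
        (fun a _ x hx => (hCideal a x hx).1)
        (fun a ha x hx => hnilp a (hsD a ha) x hx)
        (fun a ha a' ha' x hx => by
          have hz : mul (mul a a') x = 0 :=
            habel _ (hsq a (hsD a ha) a' (hsD a' ha')) x hx
          rw [leibniz a a' x, hz, zero_add])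
      have hLann : ∀ a ∈ D, mul a x0 = 0 := by
        intro a ha
        have hker : D ≤ LinearMap.ker (mul.flip x0) := by
          rw [← hs, Submodule.span_le]
          intro a' ha'
          refine LinearMap.mem_ker.mpr ?_
          have := hx0 a' (by simpa using ha')
          simpa using this
        simpa using LinearMap.mem_ker.mp (hker ha)
      have hRkill : ∀ a ∈ D, ∀ a' ∈ D, mul a (mul x0 a') = 0 := by
        intro a ha a' ha'
        have h1 : mul x0 (mul a a') = 0 := habel x0 hx0C _ (hsq a ha a' ha')
        rw [leibniz a x0 a', hLann a ha, h1, add_zero, map_zero, LinearMap.zero_apply]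
      have hW : ∃ w, w ∈ C ∧ w ≠ 0 ∧ (∀ a ∈ D, mul a w = 0) ∧ (∀ a ∈ D, mul w a = 0) := by
        by_cases hr : ∀ a ∈ D, mul x0 a = 0
        · exact ⟨x0, hx0C, hx0ne, hLann, hr⟩
        · push_neg at hr
          obtain ⟨a0, ha0, ha0ne⟩ := hr
          refine ⟨mul x0 a0, (hCideal a0 x0 hx0C).2, ha0ne, fun a ha => hRkill a ha a0 ha0, ?_⟩
          intro a ha
          have h := leibniz x0 a0 a
          have h1 : mul x0 (mul a0 a) = 0 := habel x0 hx0C _ (hsq a0 ha0 a ha)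
          have h2 : mul a0 (mul x0 a) = 0 := hRkill a0 ha0 a ha
          rw [h1, h2, add_zero] at h
          exact h.symm
      obtain ⟨w, hwC, hwne, hwl, hwr⟩ := hW
      set W : Submodule F A :=
        { carrier := {c : A | c ∈ C ∧ ∀ a ∈ D, mul a c = 0 ∧ mul c a = 0}
          add_mem' := by
            rintro x y ⟨hxC, hx⟩ ⟨hyC, hy⟩
            refine ⟨C.add_mem hxC hyC, fun a ha => ⟨?_, ?_⟩⟩
            · rw [map_add, (hx a ha).1, (hy a ha).1, add_zero]
            · rw [map_add, LinearMap.add_apply, (hx a ha).2, (hy a ha).2, add_zero]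
          zero_mem' := ⟨C.zero_mem, fun a _ => ⟨map_zero _, by simp⟩⟩
          smul_mem' := by
            rintro r x ⟨hxC, hx⟩
            refine ⟨C.smul_mem r hxC, fun a ha => ⟨?_, ?_⟩⟩
            · rw [map_smul, (hx a ha).1, smul_zero]
            · rw [map_smul, LinearMap.smul_apply, (hx a ha).2, smul_zero] } with hWdef
      have hWC : W ≤ C := fun c hc => hc.1
      have hWideal : IsIdeal mul W := by
        intro p c hc
        obtain ⟨hcC, hcann⟩ := hc
        constructor
        · refine ⟨(hCideal p c hcC).1, fun a ha => ⟨?_, ?_⟩⟩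
          · rw [leibniz a p c, (hcann (mul a p) (hDideal p a ha).2).1,
              (hcann a ha).1, map_zero, add_zero]
          · have h := leibniz p c a
            rw [(hcann a ha).2, map_zero, (hcann (mul p a) (hDideal p a ha).1).2,
              add_zero] at h
            exact h.symm
        · refine ⟨(hCideal p c hcC).2, fun a ha => ⟨?_, ?_⟩⟩
          · rw [leibniz a c p, (hcann a ha).1, (hcann (mul a p) (hDideal p a ha).2).2,
              map_zero, LinearMap.zero_apply, add_zero]
          · have h := leibniz c p a
            rw [(hcann (mul p a) (hDideal p a ha).1).2, (hcann a ha).2, map_zero,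
              add_zero] at h
            exact h.symm
      have hWne : W ≠ ⊥ := by
        intro h
        apply hwne
        have hmem : w ∈ W := ⟨hwC, fun a ha => ⟨hwl a ha, hwr a ha⟩⟩
        rw [h] at hmem
        simpa using hmem
      rcases hCmin W hWideal hWC with h | h
      · exact hWne h
      · have hDC : D ≤ C := by
          intro a ha
          have hmem : a ∈ {x : A | ∀ c ∈ C, mul x c = 0 ∧ mul c x = 0} := by
            intro c hc
            have hcW : c ∈ W := by rw [h]; exact hc
            exact ⟨(hcW.2 a ha).1, (hcW.2 a ha).2⟩
          rw [hcent] at hmem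
          exact hmem
        exact lt_irrefl C (lt_of_lt_of_le hCD hDC)
    · push_neg at hnilp
      obtain ⟨b, hbD, c0, hc0C, h0⟩ := hnilp
      have hstab : ∀ m, n0 ≤ m →
          LinearMap.ker ((mul b) ^ m) = LinearMap.ker ((mul b) ^ n0) := by
        intro m hm
        rw [Module.End.ker_pow_eq_ker_pow_finrank_of_le (by omega),
          Module.End.ker_pow_eq_ker_pow_finrank_of_le (by omega : finrank F A ≤ n0)]
      set U : Submodule F A := LinearMap.ker ((mul b) ^ n0) with hUdef
      have hUsub : ∀ x ∈ U, ∀ y ∈ U, mul x y ∈ U := by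
        intro x hx y hy
        have h1 := aux_ker_mul mul leibniz b (n0 + n0) n0 n0 rfl x y
          (LinearMap.mem_ker.mp hx) (LinearMap.mem_ker.mp hy)
        have h2 : mul x y ∈ LinearMap.ker ((mul b) ^ (n0 + n0)) := LinearMap.mem_ker.mpr h1
        rw [hstab (n0 + n0) (by omega)] at h2
        exact h2
      have hrange : LinearMap.range ((mul b) ^ (n0 + n0)) = LinearMap.range ((mul b) ^ n0) := by
        apply Submodule.eq_of_le_of_finrank_le
        · rw [pow_add, Module.End.mul_eq_comp]
          exact LinearMap.range_comp_le_range _ _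
        · have e1 := LinearMap.finrank_range_add_finrank_ker ((mul b) ^ (n0 + n0))
          have e2 := LinearMap.finrank_range_add_finrank_ker ((mul b) ^ n0)
          rw [hstab (n0 + n0) (by omega), hUdef] at e1
          omega
      have hsup : U ⊔ LinearMap.range ((mul b) ^ n0) = ⊤ := by
        rw [eq_top_iff]
        intro x _
        have hx : ((mul b) ^ n0) x ∈ LinearMap.range ((mul b) ^ (n0 + n0)) := by
          rw [hrange]; exact ⟨x, rfl⟩
        obtain ⟨y, hy⟩ := hx
        apply Submodule.mem_sup.mpr
        refine ⟨x - ((mul b) ^ n0) y, ?_, ((mul b) ^ n0) y, ⟨y, rfl⟩, by abel⟩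
        refine LinearMap.mem_ker.mpr ?_
        have e : ((mul b) ^ (n0 + n0)) y = ((mul b) ^ n0) (((mul b) ^ n0) y) := by
          conv_lhs => rw [pow_add]
          rfl
        rw [map_sub, ← e, hy, sub_self]
      have hrC : LinearMap.range ((mul b) ^ n0) ≤ C := by
        rintro _ ⟨x, rfl⟩
        have e : ((mul b) ^ n0) x = ((mul b) ^ (finrank F A)) (((mul b) ^ 2) x) := by
          rw [hn0, pow_add, Module.End.mul_eq_comp]; rfl
        have h2 : ((mul b) ^ 2) x ∈ C := by
          rw [show ((mul b) ^ 2) x = mul b (mul b x) by rw [pow_two, Module.End.mul_eq_comp]; rfl]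
          exact hsq b hbD (mul b x) (hDideal x b hbD).2
        have hiter : ∀ j : ℕ, ∀ c : A, c ∈ C → ((mul b) ^ j) c ∈ C := by
          intro j
          induction j with
          | zero => intro c hc; simpa using hc
          | succ j ihj =>
            intro c hc
            rw [show ((mul b) ^ (j+1)) c = ((mul b) ^ j) (mul b c) by rw [pow_succ]; rfl]
            exact ihj _ (hCideal b c hc).1
        rw [e]
        exact hiter _ _ h2
      have hUne : U ≠ ⊤ := by
        intro h
        apply h0
        have : c0 ∈ U := by rw [h]; trivial
        exact LinearMap.mem_ker.mp this
      obtain ⟨M, hUM, hMsub, hMne, hMmax⟩ : ∃ M, U ≤ M ∧ (∀ u ∈ M, ∀ v ∈ M, mul u v ∈ M) ∧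
          M ≠ ⊤ ∧ ∀ V : Submodule F A, (∀ u ∈ V, ∀ v ∈ V, mul u v ∈ V) → M < V → V = ⊤ := by
        obtain ⟨M, hUM, hM⟩ := aux_max mul (finrank F A) U hUsub hUne (by omega)
        exact ⟨M, hUM, hM.1, hM.2.1, hM.2.2⟩
      have hMC : M ⊔ C = ⊤ := by
        rw [eq_top_iff]
        calc (⊤ : Submodule F A) = U ⊔ LinearMap.range ((mul b) ^ n0) := hsup.symm
        _ ≤ M ⊔ C := sup_le_sup hUM hrC
      have hMCinf : M ⊓ C = ⊥ := by
        have hideal : IsIdeal mul (M ⊓ C) := by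
          intro p z hz
          have hzM : z ∈ M := (Submodule.mem_inf.mp hz).1
          have hzC : z ∈ C := (Submodule.mem_inf.mp hz).2
          have hp : p ∈ M ⊔ C := by rw [hMC]; trivial
          obtain ⟨m, hm, c, hc, rfl⟩ := Submodule.mem_sup.mp hp
          constructor
          · rw [map_add, LinearMap.add_apply, habel c hc z hzC, add_zero]
            exact Submodule.mem_inf.mpr ⟨hMsub m hm z hzM, (hCideal m z hzC).1⟩
          · rw [map_add, habel z hzC c hc, add_zero]
            exact Submodule.mem_inf.mpr ⟨hMsub z hzM m hm, (hCideal m z hzC).2⟩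
        rcases hCmin (M ⊓ C) hideal inf_le_right with h | h
        · exact h
        · exfalso
          apply hMne
          have hCM : C ≤ M := inf_eq_right.mp h
          rw [← hMC]
          exact (sup_eq_left.mpr hCM).symm
      exact ⟨M, ⟨hMsub, hMne, hMmax⟩, hMC, hMCinf⟩
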